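/- arXiv:2208.08737 — 2 statements merged into one kernel-verified Lean document; each statement's English description precedes it below -/
import Mathlib

section
/- Each of the three complex 3×3 matrices r₁ = [[1,0,0],[0,0,1],[0,1,0]], r₂ = [[1,0,0],[0,1,0],[0,0,-1]], r₃ = (1/2)·[[1,-1,-α],[-1,1,-α],[-ᾱ,-ᾱ,0]] (with α = (1+i√7)/2, ᾱ = (1-i√7)/2) is unitary of order 2, and its fixed subspace in ℂ³ has dimension 2 (i.e., each rᵢ is a complex reflection of order 2). -/
open Matrix

noncomputable def alpha : ℂ := (1 + Complex.I * Real.sqrt 7) / 2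
noncomputable def alphaBar : ℂ := (1 - Complex.I * Real.sqrt 7) / 2

noncomputable def r1 : Matrix (Fin 3) (Fin 3) ℂ := !![1,0,0; 0,0,1; 0,1,0]
noncomputable def r2 : Matrix (Fin 3) (Fin 3) ℂ := !![1,0,0; 0,1,0; 0,0,-1]
noncomputable def r3 : Matrix (Fin 3) (Fin 3) ℂ :=
  (1/2 : ℂ) • !![1,-1,-alpha; -1,1,-alpha; -alphaBar,-alphaBar,0]

lemma ker_dim_of_vecMulVec (A : Matrix (Fin 3) (Fin 3) ℂ) (w v : Fin 3 → ℂ)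
    (h : A = vecMulVec w v) (hA : A ≠ 0) :
    Module.finrank ℂ (LinearMap.ker (Matrix.toLin' A)) = 2 := by
  have hrk : (Matrix.toLin' A).rank ≤ 1 := h ▸ Matrix.rank_vecMulVec w v
  have hfr : Module.finrank ℂ (LinearMap.range (Matrix.toLin' A)) ≤ 1 := by
    have := Cardinal.toNat_le_toNat hrk (by simp)
    simpa [Module.finrank, LinearMap.rank] using this
  have hne : Module.finrank ℂ (LinearMap.range (Matrix.toLin' A)) ≠ 0 := by
    intro h0
    rw [Submodule.finrank_eq_zero (R := ℂ), LinearMap.range_eq_bot] at h0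
    exact hA (Matrix.toLin'.injective (by simpa using h0))
  have h1 : Module.finrank ℂ (LinearMap.range (Matrix.toLin' A)) = 1 := by omega
  have := LinearMap.finrank_range_add_finrank_ker (Matrix.toLin' A)
  simp only [h1] at this
  have h3 : Module.finrank ℂ (Fin 3 → ℂ) = 3 := by simp
  omega

lemma hmul : alpha * alphaBar = 2 := by
  have key : (Complex.I * (Real.sqrt 7 : ℝ)) * (Complex.I * (Real.sqrt 7 : ℝ)) = -7 := by
    have h : ((Real.sqrt 7 : ℝ) : ℂ) * ((Real.sqrt 7 : ℝ) : ℂ) = 7 := by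
      norm_cast
      exact Real.mul_self_sqrt (by norm_num)
    rw [mul_mul_mul_comm, Complex.I_mul_I, h]; ring
  unfold alpha alphaBar
  linear_combination (-1/4 : ℂ) * key

lemma hconj : (starRingEnd ℂ) alpha = alphaBar := by
  unfold alpha alphaBar
  simp [map_div₀, Complex.conj_ofReal, map_ofNat]
  try ring

lemma hconj' : (starRingEnd ℂ) alphaBar = alpha := by
  unfold alpha alphaBar
  simp [map_div₀, Complex.conj_ofReal, map_ofNat]
  try ring

lemma star_r1 : star r1 = r1 := by
  ext i j; fin_cases i <;> fin_cases j <;>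
    simp [r1, Matrix.star_apply, Matrix.vecHead, Matrix.vecTail]

lemma star_r2 : star r2 = r2 := by
  ext i j; fin_cases i <;> fin_cases j <;>
    simp [r2, Matrix.star_apply, Matrix.vecHead, Matrix.vecTail]

lemma star_r3 : star r3 = r3 := by
  ext i j; fin_cases i <;> fin_cases j <;>
    simp [r3, Matrix.star_apply, hconj, hconj']

lemma sq_r1 : r1 * r1 = 1 := by
  ext i j; fin_cases i <;> fin_cases j <;>
    simp [r1, Matrix.mul_apply, Fin.sum_univ_succ, Matrix.one_apply]

lemma sq_r2 : r2 * r2 = 1 := by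
  ext i j; fin_cases i <;> fin_cases j <;>
    simp [r2, Matrix.mul_apply, Fin.sum_univ_succ, Matrix.one_apply]

lemma sq_r3 : r3 * r3 = 1 := by
  ext i j; fin_cases i <;> fin_cases j <;>
    simp [r3, Matrix.mul_apply, Fin.sum_univ_succ, Matrix.one_apply] <;>
    first
    | ring1
    | (linear_combination (1/4 : ℂ) * hmul)
    | (linear_combination (-1/4 : ℂ) * hmul)
    | (linear_combination (1/2 : ℂ) * hmul)

lemma dec_r1 : r1 - 1 = vecMulVec ![0,1,-1] ![0,-1,1] := by
  ext i j; fin_cases i <;> fin_cases j <;>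
    simp [r1, vecMulVec_apply, Matrix.one_fin_three, Matrix.sub_apply, Matrix.vecHead, Matrix.vecTail]

lemma dec_r2 : r2 - 1 = vecMulVec ![0,0,1] ![0,0,-2] := by
  ext i j; fin_cases i <;> fin_cases j <;>
    norm_num [r2, vecMulVec_apply, Matrix.one_fin_three, Matrix.sub_apply, Matrix.vecHead, Matrix.vecTail]

lemma dec_r3 : r3 - 1 = vecMulVec ![-1/2, -1/2, -(alphaBar/2)] ![1,1,alpha] := by
  ext i j; fin_cases i <;> fin_cases j <;>
    simp [r3, vecMulVec_apply, Matrix.one_fin_three, Matrix.sub_apply, Matrix.vecHead, Matrix.vecTail] <;>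
    first
    | ring1
    | (linear_combination (1/2 : ℂ) * hmul)
    | (linear_combination (-1/2 : ℂ) * hmul)

/-- Each `rᵢ` is a unitary involution whose fixed subspace is a hyperplane
(a complex reflection of order 2). -/
theorem stmt_2 :
    (∀ r ∈ ({r1, r2, r3} : Set (Matrix (Fin 3) (Fin 3) ℂ)),
      r ∈ Matrix.unitaryGroup (Fin 3) ℂ ∧
      r * r = 1 ∧ r ≠ 1 ∧
      Module.finrank ℂ (LinearMap.ker (Matrix.toLin' (r - 1))) = 2) := by
  intro r hr
  rcases hr with rfl | rfl | rfl
  · refine ⟨?_, sq_r1, ?_, ker_dim_of_vecMulVec _ _ _ dec_r1 ?_⟩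
    · rw [Matrix.mem_unitaryGroup_iff]
      rw [star_r1]; exact sq_r1
    · intro h
      have := congrFun (congrFun h 1) 1
      norm_num [r1, Matrix.one_fin_three, Matrix.sub_apply, Matrix.vecHead, Matrix.vecTail, Matrix.cons_val_two] at this
    · intro h
      have := congrFun (congrFun h 1) 2
      norm_num [r1, Matrix.one_fin_three, Matrix.sub_apply, Matrix.vecHead, Matrix.vecTail, Matrix.cons_val_two] at this
  · refine ⟨?_, sq_r2, ?_, ker_dim_of_vecMulVec _ _ _ dec_r2 ?_⟩
    · rw [Matrix.mem_unitaryGroup_iff]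
      rw [star_r2]; exact sq_r2
    · intro h
      have := congrFun (congrFun h 2) 2
      norm_num [r2, Matrix.one_fin_three, Matrix.sub_apply, Matrix.vecHead, Matrix.vecTail, Matrix.cons_val_two] at this
    · intro h
      have := congrFun (congrFun h 2) 2
      norm_num [r2, Matrix.one_fin_three, Matrix.sub_apply, Matrix.vecHead, Matrix.vecTail, Matrix.cons_val_two] at this
  · refine ⟨?_, sq_r3, ?_, ker_dim_of_vecMulVec _ _ _ dec_r3 ?_⟩
    · rw [Matrix.mem_unitaryGroup_iff]
      rw [star_r3]; exact sq_r3
    · intro h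
      have := congrFun (congrFun h 2) 2
      norm_num [r3, Matrix.one_fin_three, Matrix.sub_apply, Matrix.vecHead, Matrix.vecTail, Matrix.cons_val_two] at this
    · intro h
      have := congrFun (congrFun h 2) 2
      norm_num [r3, Matrix.one_fin_three, Matrix.sub_apply, Matrix.vecHead, Matrix.vecTail, Matrix.cons_val_two] at this
end

section
/- The generating function Σ_{k≥0} h(k) t^k, where h(k) = k³/48 + 3k²/16 + 2k/3 + 1 + d₀(k)k + d₁(k) with d₀, d₁ the 4-periodic functions d₀ = 0, -3/16, 0, -3/16 and d₁ = 0, -11/16, -1/4, -11/16 for k ≡ 0,1,2,3 mod 4 respectively, equals the rational function (1 - t + t²)/((1-t)²(1-t²)(1-t⁴)). -/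
open PowerSeries

def d0 (k : ℕ) : ℚ := if k % 4 = 0 ∨ k % 4 = 2 then 0 else -3/16
def d1 (k : ℕ) : ℚ := if k % 4 = 0 then 0 else if k % 4 = 2 then -1/4 else -11/16

def hfun (k : ℕ) : ℚ :=
  (k : ℚ) ^ 3 / 48 + 3 * (k : ℚ) ^ 2 / 16 + 2 * (k : ℚ) / 3 + 1 + d0 k * k + d1 k

lemma hfun_rec (m : ℕ) :
    hfun (m + 8) - 2 * hfun (m + 7) + 2 * hfun (m + 5) - 2 * hfun (m + 4)
      + 2 * hfun (m + 3) - 2 * hfun (m + 1) + hfun m = 0 := by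
  obtain ⟨q, r, hr, rfl⟩ : ∃ q r, r < 4 ∧ m = 4 * q + r :=
    ⟨m / 4, m % 4, by omega, by omega⟩
  have h4 : ∀ c : ℕ, (4 * q + r + c) % 4 = (r + c) % 4 := fun c => by omega
  have h40 : (4 * q + r) % 4 = r % 4 := by omega
  interval_cases r <;>
  · simp only [hfun, d0, d1, h4, h40]
    norm_num
    ring

set_option maxHeartbeats 1000000 in
/-- `Σ_{k≥0} h(k) t^k = (1 - t + t²)/((1-t)²(1-t²)(1-t⁴))`. -/
theorem stmt_18 :
    PowerSeries.mk hfun * ((1 - X) ^ 2 * (1 - X ^ 2) * (1 - X ^ 4)) =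
      1 - X + X ^ 2 := by
  have e : PowerSeries.mk hfun * ((1 - X) ^ 2 * (1 - X ^ 2) * (1 - X ^ 4))
      = PowerSeries.mk hfun - C (2:ℚ) * (PowerSeries.mk hfun * X ^ 1)
        + C (2:ℚ) * (PowerSeries.mk hfun * X ^ 3)
        - C (2:ℚ) * (PowerSeries.mk hfun * X ^ 4)
        + C (2:ℚ) * (PowerSeries.mk hfun * X ^ 5)
        - C (2:ℚ) * (PowerSeries.mk hfun * X ^ 7)
        + PowerSeries.mk hfun * X ^ 8 := by
    rw [show C (2:ℚ) = 2 from map_ofNat _ 2]; ring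
  rw [e]
  ext n
  simp only [map_sub, map_add, coeff_C_mul, coeff_mul_X_pow', coeff_mk,
    coeff_one, coeff_X, coeff_X_pow]
  rcases lt_or_ge n 8 with hn | hn
  · interval_cases n <;> norm_num [hfun, d0, d1]
  · obtain ⟨m, rfl⟩ : ∃ m, n = m + 8 := ⟨n - 8, by omega⟩
    simp only [show m + 8 - 1 = m + 7 from by omega,
      show m + 8 - 3 = m + 5 from by omega,
      show m + 8 - 4 = m + 4 from by omega,
      show m + 8 - 5 = m + 3 from by omega,
      show m + 8 - 7 = m + 1 from by omega,
      show m + 8 - 8 = m from by omega]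
    have h1 : ¬ (m + 8 = 0) := by omega
    have h2 : ¬ (m + 8 = 1) := by omega
    have h3 : ¬ (m + 8 = 2) := by omega
    simp only [if_neg h1, if_neg h2, if_neg h3,
      if_pos (by omega : 1 ≤ m + 8), if_pos (by omega : 3 ≤ m + 8),
      if_pos (by omega : 4 ≤ m + 8), if_pos (by omega : 5 ≤ m + 8),
      if_pos (by omega : 7 ≤ m + 8), if_pos (by omega : 8 ≤ m + 8)]
    linarith [hfun_rec m]
end
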